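/- Let S be the closed disc of radius R > 0 centered at the origin in the Euclidean plane ℝ², and let f : ℝ² → ℝ be given by f(x) = φ(‖x‖) where φ : [0, ∞) → [0, ∞) is antitone (non-increasing), so that f is a radially symmetric unimodal density on S with mode at the center. Then for every d > 0 and every y ∈ S, ∫_{B̄(0,d) ∩ S} f(x) dx ≥ ∫_{B̄(y,d) ∩ S} f(x) dx, where B̄(z,d) denotes the closed Euclidean ball of radius d about z; that is, the center of the disc (the MAP estimate) is simultaneously an MP(d) estimate for every radius d. -/

import Mathlib

open MeasureTheory Metric Set

/-- On the closed disc `S` of radius `R` centered at the origin, for a radially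
symmetric unimodal density `f x = φ ‖x‖` with `φ` non-increasing and
nonnegative on `[0, ∞)`, the center of the disc (the MAP estimate) captures at
least as much probability mass within every radius `d` as any other point
`y ∈ S`: the center is simultaneously an MP(d) estimate for every `d`. -/
theorem disc_center_is_MPd_for_all_radii
    (R : ℝ) (hR : 0 < R)
    (φ : ℝ → ℝ) (hφ : AntitoneOn φ (Ici 0)) (hφ0 : ∀ x ∈ Ici (0:ℝ), 0 ≤ φ x)
    (f : EuclideanSpace ℝ (Fin 2) → ℝ) (hf : ∀ x, f x = φ ‖x‖) :
    ∀ d : ℝ, 0 < d →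
      ∀ y ∈ closedBall (0 : EuclideanSpace ℝ (Fin 2)) R,
        (∫ x in closedBall y d ∩ closedBall (0 : EuclideanSpace ℝ (Fin 2)) R, f x)
          ≤ ∫ x in closedBall (0 : EuclideanSpace ℝ (Fin 2)) d ∩
              closedBall (0 : EuclideanSpace ℝ (Fin 2)) R, f x := by
  intro d hd y hy
  -- measurability of f
  have hψ : Antitone (fun t : ℝ => φ (max t 0)) := fun a b hab =>
    hφ (mem_Ici.2 (le_max_right _ _)) (mem_Ici.2 (le_max_right _ _)) (max_le_max hab le_rfl)
  have hfm : Measurable f := by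
    have hfeq : f = (fun t => φ (max t 0)) ∘ (fun x : EuclideanSpace ℝ (Fin 2) => ‖x‖) := by
      funext x
      simp [hf, max_eq_left (norm_nonneg x)]
    rw [hfeq]
    exact hψ.measurable.comp measurable_norm
  have hfnonneg : ∀ x, 0 ≤ f x := fun x => (hf x) ▸ hφ0 _ (norm_nonneg x)
  have hbound : ∀ x : EuclideanSpace ℝ (Fin 2), ‖f x‖ ≤ φ 0 := by
    intro x
    rw [Real.norm_of_nonneg (hfnonneg x), hf]
    exact hφ (mem_Ici.2 le_rfl) (mem_Ici.2 (norm_nonneg x)) (norm_nonneg x)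
  have hInt : ∀ s : Set (EuclideanSpace ℝ (Fin 2)), volume s ≠ ⊤ → IntegrableOn f s := by
    intro s hs
    exact Measure.integrableOn_of_bounded hs hfm.aestronglyMeasurable
      (Filter.Eventually.of_forall hbound)
  set A : Set (EuclideanSpace ℝ (Fin 2)) :=
    closedBall (0 : EuclideanSpace ℝ (Fin 2)) d ∩ closedBall 0 R with hA
  set B : Set (EuclideanSpace ℝ (Fin 2)) :=
    closedBall y d ∩ closedBall 0 R with hB
  have hAfin : volume A ≠ ⊤ :=
    ((measure_mono inter_subset_left).trans_lt measure_closedBall_lt_top).ne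
  have hBfin : volume B ≠ ⊤ :=
    ((measure_mono inter_subset_left).trans_lt measure_closedBall_lt_top).ne
  have hAmeas : MeasurableSet A := (measurableSet_closedBall).inter measurableSet_closedBall
  have hBmeas : MeasurableSet B := (measurableSet_closedBall).inter measurableSet_closedBall
  rcases le_or_gt R d with hRd | hdR
  · -- trivial case: A = closedBall 0 R ⊇ B
    have hAeq : A = closedBall 0 R :=
      inter_eq_right.2 (closedBall_subset_closedBall hRd)
    have hsub : B ⊆ A := hAeq ▸ inter_subset_right
    exact setIntegral_mono_set (hInt A hAfin)
      (Filter.Eventually.of_forall hfnonneg) (HasSubset.Subset.eventuallyLE hsub)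
  · -- main case: d < R, so A = closedBall 0 d
    have hAeq : A = closedBall (0 : EuclideanSpace ℝ (Fin 2)) d :=
      inter_eq_left.2 (closedBall_subset_closedBall hdR.le)
    -- split the integrals
    have hsplitB : (∫ x in B ∩ A, f x) + ∫ x in B \ A, f x = ∫ x in B, f x :=
      integral_inter_add_diff hAmeas (hInt B hBfin)
    have hsplitA : (∫ x in A ∩ B, f x) + ∫ x in A \ B, f x = ∫ x in A, f x :=
      integral_inter_add_diff hBmeas (hInt A hAfin)
    rw [← hsplitA, ← hsplitB, inter_comm B A]
    refine add_le_add_right ?_ _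
    -- compare the two difference pieces via the threshold value φ d
    have hφd0 : 0 ≤ φ d := hφ0 d hd.le
    -- measure comparison: volume (B \ A) ≤ volume (A \ B)
    have hmeasAB : volume (B \ A) ≤ volume (A \ B) := by
      have h1 : volume (B ∩ A) + volume (B \ A) = volume B :=
        measure_inter_add_diff B hAmeas
      have h2 : volume (A ∩ B) + volume (A \ B) = volume A :=
        measure_inter_add_diff A hBmeas
      have hballs : volume B ≤ volume A := by
        rw [hAeq]
        calc volume B ≤ volume (closedBall y d) := measure_mono inter_subset_left
          _ = volume (closedBall (0 : EuclideanSpace ℝ (Fin 2)) d) := by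
            rw [Measure.addHaar_closedBall volume y hd.le,
              Measure.addHaar_closedBall volume 0 hd.le]
      have hfin : volume (B ∩ A) ≠ ⊤ :=
        ((measure_mono inter_subset_left).trans_lt hBfin.lt_top).ne
      have key : volume (B ∩ A) + volume (B \ A) ≤ volume (B ∩ A) + volume (A \ B) := by
        rw [h1]
        calc volume B ≤ volume A := hballs
          _ = volume (A ∩ B) + volume (A \ B) := h2.symm
          _ = volume (B ∩ A) + volume (A \ B) := by rw [inter_comm]
      exact (ENNReal.add_le_add_iff_left hfin).1 key
    -- bound each piece by the constant φ d
    have hBA : (∫ x in B \ A, f x) ≤ (volume (B \ A)).toReal * φ d := by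
      have hfinBA : volume (B \ A) ≠ ⊤ :=
        ((measure_mono diff_subset).trans_lt hBfin.lt_top).ne
      have hle : ∀ x ∈ B \ A, f x ≤ φ d := by
        rintro x ⟨hxB, hxA⟩
        have hxR : x ∈ closedBall (0 : EuclideanSpace ℝ (Fin 2)) R := hxB.2
        have hxd : d < ‖x‖ := by
          by_contra h
          push_neg at h
          exact hxA ⟨by simpa [mem_closedBall, dist_zero_right] using h, hxR⟩
        rw [hf]
        exact hφ hd.le (le_trans hd.le hxd.le) hxd.le
      calc (∫ x in B \ A, f x) ≤ ∫ x in B \ A, φ d :=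
            setIntegral_mono_on (hInt _ hfinBA)
              (integrableOn_const hfinBA)
              (hBmeas.diff hAmeas) hle
        _ = (volume (B \ A)).toReal * φ d := by rw [setIntegral_const, smul_eq_mul, measureReal_def]
    have hAB : (volume (A \ B)).toReal * φ d ≤ ∫ x in A \ B, f x := by
      have hfinAB : volume (A \ B) ≠ ⊤ :=
        ((measure_mono diff_subset).trans_lt hAfin.lt_top).ne
      have hle : ∀ x ∈ A \ B, φ d ≤ f x := by
        rintro x ⟨hxA, _⟩
        have hxd : ‖x‖ ≤ d := by
          have := hxA.1
          simpa [mem_closedBall, dist_zero_right] using this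
        rw [hf]
        exact hφ (norm_nonneg x) hd.le hxd
      calc (volume (A \ B)).toReal * φ d = ∫ x in A \ B, φ d := by
            rw [setIntegral_const, smul_eq_mul, measureReal_def]
        _ ≤ ∫ x in A \ B, f x :=
            setIntegral_mono_on (integrableOn_const hfinAB)
              (hInt _ hfinAB) (hAmeas.diff hBmeas) hle
    calc (∫ x in B \ A, f x) ≤ (volume (B \ A)).toReal * φ d := hBA
      _ ≤ (volume (A \ B)).toReal * φ d := by
          apply mul_le_mul_of_nonneg_right _ hφd0
          exact ENNReal.toReal_mono
            (((measure_mono diff_subset).trans_lt hAfin.lt_top).ne) hmeasAB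
      _ ≤ ∫ x in A \ B, f x := hAB
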